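/- A nonabelian nilpotent finite-dimensional real Lie algebra admits no cyclic inner product. -/

import Mathlib

/-- A nonabelian nilpotent finite-dimensional real Lie algebra admits no
cyclic inner product. -/
theorem nilpotent_nonabelian_no_cyclic {L : Type*} [LieRing L] [LieAlgebra ℝ L]
    [FiniteDimensional ℝ L] [LieRing.IsNilpotent L]
    (hnab : ¬ IsLieAbelian L) :
    ¬ ∃ B : L →ₗ[ℝ] L →ₗ[ℝ] ℝ,
        (∀ x y : L, B x y = B y x) ∧
        (∀ x : L, x ≠ 0 → 0 < B x x) ∧
        (∀ X Y Z : L, B ⁅X, Y⁆ Z + B ⁅Y, Z⁆ X + B ⁅Z, X⁆ Y = 0) := by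
  classical
  rintro ⟨B, hsymm, hpos, hcyc⟩
  have hex : ∃ k, LieModule.lowerCentralSeries ℝ L L k = ⊥ :=
    (LieModule.isNilpotent_iff ℝ L L).mp inferInstance
  have h1 : LieModule.lowerCentralSeries ℝ L L 1 ≠ ⊥ := by
    intro h
    exact hnab ((LieModule.trivial_iff_lower_central_eq_bot ℝ L L).mpr h)
  obtain ⟨k, hk1, hkne, hksucc⟩ :
      ∃ k, 1 ≤ k ∧ LieModule.lowerCentralSeries ℝ L L k ≠ ⊥ ∧
        LieModule.lowerCentralSeries ℝ L L (k + 1) = ⊥ := by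
    have hmbot : LieModule.lowerCentralSeries ℝ L L (Nat.find hex) = ⊥ := Nat.find_spec hex
    have hm1 : 1 < Nat.find hex := by
      rcases Nat.lt_or_ge 1 (Nat.find hex) with h | h
      · exact h
      · exact absurd (le_bot_iff.mp
          (hmbot ▸ LieModule.antitone_lowerCentralSeries ℝ L L h)) h1
    refine ⟨Nat.find hex - 1, by omega, Nat.find_min hex (by omega), ?_⟩
    rwa [show Nat.find hex - 1 + 1 = Nat.find hex by omega]
  -- pick a nonzero W in LCS k
  obtain ⟨W, hWmem, hWne⟩ :
      ∃ W, W ∈ LieModule.lowerCentralSeries ℝ L L k ∧ W ≠ 0 := by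
    by_contra h
    push_neg at h
    exact hkne (by
      rw [LieSubmodule.eq_bot_iff]
      exact fun x hx => h x hx)
  -- W is central
  have hcent : ∀ X : L, ⁅X, W⁆ = 0 := by
    intro X
    have : ⁅X, W⁆ ∈ LieModule.lowerCentralSeries ℝ L L (k + 1) := by
      rw [LieModule.lowerCentralSeries_succ]
      exact LieSubmodule.lie_mem_lie (LieSubmodule.mem_top X) hWmem
    rwa [hksucc, LieSubmodule.mem_bot] at this
  -- B (⁅X,Y⁆) W = 0 for all X Y
  have hbr : ∀ X Y : L, B ⁅X, Y⁆ W = 0 := by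
    intro X Y
    have hWX : (⁅W, X⁆ : L) = 0 := by rw [← lie_skew, hcent, neg_zero]
    have := hcyc X Y W
    rw [hcent, hWX] at this
    simpa using this
  -- W lies in LCS 1 = ⁅⊤,⊤⁆, a span of brackets
  have hW1 : W ∈ LieModule.lowerCentralSeries ℝ L L 1 :=
    LieModule.antitone_lowerCentralSeries ℝ L L hk1 hWmem
  have hspan : W ∈ Submodule.span ℝ { z : L | ∃ x ∈ (⊤ : LieIdeal ℝ L),
      ∃ n ∈ (⊤ : LieSubmodule ℝ L L), ⁅x, n⁆ = z } := by
    have h1eq : LieModule.lowerCentralSeries ℝ L L 1 =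
        ⁅(⊤ : LieIdeal ℝ L), (⊤ : LieSubmodule ℝ L L)⁆ := by
      rw [show (1 : ℕ) = 0 + 1 from rfl, LieModule.lowerCentralSeries_succ,
        LieModule.lowerCentralSeries_zero]
    rw [h1eq] at hW1
    rwa [← LieSubmodule.mem_toSubmodule, LieSubmodule.lieIdeal_oper_eq_linear_span'] at hW1
  have hBW : B W W = 0 := by
    have : ∀ z ∈ Submodule.span ℝ { z : L | ∃ x ∈ (⊤ : LieIdeal ℝ L),
        ∃ n ∈ (⊤ : LieSubmodule ℝ L L), ⁅x, n⁆ = z }, B z W = 0 := by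
      intro z hz
      refine Submodule.span_induction ?_ ?_ ?_ ?_ hz
      · rintro w ⟨x, -, n, -, rfl⟩; exact hbr x n
      · simp
      · intro a b _ _ ha hb; rw [map_add, LinearMap.add_apply, ha, hb, add_zero]
      · intro c a _ ha; rw [map_smul, LinearMap.smul_apply, ha, smul_zero]
    exact this W hspan
  exact absurd hBW (ne_of_gt (hpos W hWne))
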